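/- For any outerplanar graph G on n ≥ 3 vertices, the secure total domination number satisfies γ_st(G) ≥ ⌈(n+2)/3⌉. -/

import Mathlib

open SimpleGraph

variable {V : Type*}

/-- `S` is a total dominating set of `G`: every vertex has a neighbor in `S`. -/
def TotalDom (G : SimpleGraph V) (S : Set V) : Prop :=
  ∀ v : V, ∃ u ∈ S, G.Adj v u

/-- `v ∈ S` totally `S`-defends `u ∉ S`. -/
def Defends (G : SimpleGraph V) (S : Set V) (v u : V) : Prop :=
  G.Adj u v ∧ TotalDom G ((S \ {v}) ∪ {u})

/-- `S` is a secure total dominating set of `G`. -/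
def STDS (G : SimpleGraph V) (S : Set V) : Prop :=
  TotalDom G S ∧ ∀ u ∉ S, ∃ v ∈ S, Defends G S v u

/-- `S` is a 2-dominating set of `G`. -/
def TwoDom (G : SimpleGraph V) (S : Set V) : Prop :=
  ∀ v ∉ S, 2 ≤ (S ∩ G.neighborSet v).ncard

/-- external private neighborhood of `v` with respect to `S`. -/
def epn (G : SimpleGraph V) (v : V) (S : Set V) : Set V :=
  {w | w ∉ S ∧ G.neighborSet w ∩ S = {v}}

/-- internal private neighborhood of `v` with respect to `S`. -/
def ipn (G : SimpleGraph V) (v : V) (S : Set V) : Set V :=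
  {u | u ∈ S ∧ G.neighborSet u ∩ S = {v}}

/-- secure total domination number. -/
noncomputable def gammaSt (G : SimpleGraph V) : ℕ :=
  sInf {n | ∃ S : Set V, STDS G S ∧ S.ncard = n}

/-- `G` contains a subgraph that is a subdivision of `K`:  there is an injective map of
branch vertices together with pairwise internally disjoint paths joining them. -/
def ContainsSubdivision {W : Type*} (K : SimpleGraph W) (G : SimpleGraph V) : Prop :=
  ∃ (f : W → V) (p : ∀ a b, K.Adj a b → G.Walk (f a) (f b)),
    Function.Injective f ∧
    (∀ a b (h : K.Adj a b), (p a b h).IsPath) ∧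
    (∀ a b (h : K.Adj a b), ∀ w ∈ (p a b h).support, w ∈ Set.range f → w = f a ∨ w = f b) ∧
    (∀ a b c d (h₁ : K.Adj a b) (h₂ : K.Adj c d), s(a, b) ≠ s(c, d) →
      ∀ w, w ∈ (p a b h₁).support → w ∈ (p c d h₂).support → w ∈ Set.range f)

/-- outerplanar graphs: no subdivision of `K₄` nor of `K₂,₃` as a subgraph. -/
def Outerplanar (G : SimpleGraph V) : Prop :=
  ¬ ContainsSubdivision (completeGraph (Fin 4)) G ∧
  ¬ ContainsSubdivision (completeBipartiteGraph (Fin 2) (Fin 3)) G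

/-- maximal outerplanar graphs: adding any edge destroys outerplanarity. -/
def MaximalOuterplanar (G : SimpleGraph V) : Prop :=
  Outerplanar G ∧
  ∀ u v : V, u ≠ v → ¬ G.Adj u v →
    ¬ Outerplanar (G ⊔ SimpleGraph.fromEdgeSet {s(u, v)})


private def chainWalk (G : SimpleGraph V) (xs us : ℕ → V) (i : ℕ) :
    ∀ (n : ℕ), (∀ m, m < n → G.Adj (xs (i + m)) (us (i + m)) ∧ G.Adj (us (i + m)) (xs (i + m + 1))) →
      G.Walk (xs i) (xs (i + n))
  | 0, _ => SimpleGraph.Walk.nil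
  | (n+1), h =>
      (chainWalk G xs us i n (fun m hm => h m (Nat.lt_succ_of_lt hm))).append
        (SimpleGraph.Walk.cons (h n (Nat.lt_succ_self n)).1
          (SimpleGraph.Walk.cons (h n (Nat.lt_succ_self n)).2 SimpleGraph.Walk.nil))

private lemma mem_chainWalk_support (G : SimpleGraph V) (xs us : ℕ → V) (i : ℕ) :
    ∀ (n : ℕ) (h : ∀ m, m < n → G.Adj (xs (i + m)) (us (i + m)) ∧ G.Adj (us (i + m)) (xs (i + m + 1)))
      (v : V), v ∈ (chainWalk G xs us i n h).support ↔
        ((∃ m, m ≤ n ∧ v = xs (i + m)) ∨ (∃ m, m < n ∧ v = us (i + m))) := by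
  intro n
  induction n with
  | zero =>
      intro h v
      simp only [chainWalk, SimpleGraph.Walk.support_nil, List.mem_singleton]
      constructor
      · rintro rfl; exact Or.inl ⟨0, le_refl _, rfl⟩
      · rintro (⟨m, hm, rfl⟩ | ⟨m, hm, rfl⟩)
        · obtain rfl : m = 0 := Nat.le_zero.mp hm
          rfl
        · exact absurd hm (Nat.not_lt_zero m)
  | succ n ih =>
      intro h v
      rw [chainWalk, SimpleGraph.Walk.support_append]
      simp only [SimpleGraph.Walk.support_cons, SimpleGraph.Walk.support_nil, List.tail_cons,
        List.mem_append, List.mem_cons, List.mem_singleton, ih]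
      constructor
      · rintro ((⟨m, hm, rfl⟩ | ⟨m, hm, rfl⟩) | rfl | (rfl | h'))
        · exact Or.inl ⟨m, by omega, rfl⟩
        · exact Or.inr ⟨m, by omega, rfl⟩
        · exact Or.inr ⟨n, by omega, rfl⟩
        · exact Or.inl ⟨n + 1, by omega, rfl⟩
        · exact absurd h' List.not_mem_nil
      · rintro (⟨m, hm, rfl⟩ | ⟨m, hm, rfl⟩)
        · rcases Nat.lt_or_ge m (n + 1) with hm' | hm'
          · exact Or.inl (Or.inl ⟨m, by omega, rfl⟩)
          · have : m = n + 1 := by omega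
            subst this
            exact Or.inr (Or.inr (Or.inl rfl))
        · rcases Nat.lt_or_ge m n with hm' | hm'
          · exact Or.inl (Or.inr ⟨m, hm', rfl⟩)
          · have : m = n := by omega
            subst this
            exact Or.inr (Or.inl rfl)

private lemma chainWalk_support_nodup (G : SimpleGraph V) (xs us : ℕ → V) (i : ℕ) :
    ∀ (n : ℕ) (h : ∀ m, m < n → G.Adj (xs (i + m)) (us (i + m)) ∧ G.Adj (us (i + m)) (xs (i + m + 1))),
      (∀ p q, p ≤ n → q ≤ n → xs (i + p) = xs (i + q) → p = q) →
      (∀ p q, p < n → q < n → us (i + p) = us (i + q) → p = q) →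
      (∀ p q, p ≤ n → q < n → xs (i + p) ≠ us (i + q)) →
      (chainWalk G xs us i n h).support.Nodup := by
  intro n
  induction n with
  | zero => intro h _ _ _; simp [chainWalk]
  | succ n ih =>
      intro h hx hu hxu
      rw [chainWalk, SimpleGraph.Walk.support_append]
      rw [List.nodup_append]
      refine ⟨ih _ (fun p q hp hq => hx p q (by omega) (by omega))
          (fun p q hp hq => hu p q (by omega) (by omega))
          (fun p q hp hq => hxu p q (by omega) (by omega)), ?_, ?_⟩
      · simp only [SimpleGraph.Walk.support_cons, SimpleGraph.Walk.support_nil, List.tail_cons]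
        simp only [List.nodup_cons, List.mem_singleton, List.nodup_cons, List.not_mem_nil,
          not_false_iff, List.nodup_nil, and_true]
        exact fun hcontra => (hxu (n + 1) n (le_refl _) (by omega)) hcontra.symm
      · intro v hv v' hv2 hvv
        subst hvv
        simp only [SimpleGraph.Walk.support_cons, SimpleGraph.Walk.support_nil, List.tail_cons,
          List.mem_cons, List.mem_singleton, List.not_mem_nil, or_false] at hv2
        rw [mem_chainWalk_support] at hv
        rcases hv with ⟨m, hm, rfl⟩ | ⟨m, hm, rfl⟩
        · rcases hv2 with h2 | h2
          · exact hxu m n (by omega) (by omega) h2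
          · have := hx m (n + 1) (by omega) (by omega) (by rw [h2]; rfl)
            omega
        · rcases hv2 with h2 | h2
          · have := hu m n (by omega) (by omega) h2
            omega
          · exact hxu (n + 1) m (by omega) (by omega) h2.symm

private lemma eq_of_mem_takeUntil_mem_dropUntil {G : SimpleGraph V} [DecidableEq V] {x y : V}
    {W : G.Walk x y} (hW : W.IsPath) {u v : V} (hu : u ∈ W.support)
    (h1 : v ∈ (W.takeUntil u hu).support) (h2 : v ∈ (W.dropUntil u hu).support) : v = u := by
  have hnd : W.support.Nodup := hW.support_nodup
  rw [← W.take_spec hu, SimpleGraph.Walk.support_append, List.nodup_append] at hnd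
  have hcons := (W.dropUntil u hu).support_eq_cons
  rw [hcons, List.mem_cons] at h2
  rcases h2 with h2 | h2
  · exact h2
  · exact absurd rfl (hnd.2.2 v h1 v h2)

private def K23F (x y : V) (m : Fin 3 → V) : Fin 2 ⊕ Fin 3 → V :=
  Sum.elim (fun a => if a = 0 then x else y) m

private def K23P (G : SimpleGraph V) [DecidableEq V] {x y : V} (W : Fin 3 → G.Walk x y)
    (m : Fin 3 → V) (hm : ∀ i, m i ∈ (W i).support) :
    ∀ a b, (completeBipartiteGraph (Fin 2) (Fin 3)).Adj a b →
      G.Walk (K23F x y m a) (K23F x y m b)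
  | Sum.inl a, Sum.inr i, _ =>
      if h : a = 0 then
        ((W i).takeUntil (m i) (hm i)).copy (by simp [K23F, h]) rfl
      else
        (((W i).dropUntil (m i) (hm i)).reverse).copy (by simp [K23F, h]) rfl
  | Sum.inr i, Sum.inl a, _ =>
      if h : a = 0 then
        (((W i).takeUntil (m i) (hm i)).reverse).copy rfl (by simp [K23F, h])
      else
        ((W i).dropUntil (m i) (hm i)).copy rfl (by simp [K23F, h])
  | Sum.inl a, Sum.inl b, hab => absurd hab (by simp)
  | Sum.inr a, Sum.inr b, hab => absurd hab (by simp)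

private lemma mem_K23P_support (G : SimpleGraph V) [DecidableEq V] {x y : V}
    (W : Fin 3 → G.Walk x y) (m : Fin 3 → V) (hm : ∀ i, m i ∈ (W i).support) :
    (∀ (a : Fin 2) (i : Fin 3) (hab) (v : V),
      (v ∈ (K23P G W m hm (Sum.inl a) (Sum.inr i) hab).support ↔
        ((a = 0 ∧ v ∈ ((W i).takeUntil (m i) (hm i)).support) ∨
         (a ≠ 0 ∧ v ∈ ((W i).dropUntil (m i) (hm i)).support)))) ∧
    (∀ (a : Fin 2) (i : Fin 3) (hab) (v : V),
      (v ∈ (K23P G W m hm (Sum.inr i) (Sum.inl a) hab).support ↔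
        ((a = 0 ∧ v ∈ ((W i).takeUntil (m i) (hm i)).support) ∨
         (a ≠ 0 ∧ v ∈ ((W i).dropUntil (m i) (hm i)).support)))) := by
  constructor <;> intro a i hab v <;> by_cases h : a = 0 <;>
    simp [K23P, h, SimpleGraph.Walk.support_copy, SimpleGraph.Walk.support_reverse,
      List.mem_reverse] <;> erw [SimpleGraph.Walk.support_copy] <;> simp

private lemma contains_K23 (G : SimpleGraph V) [DecidableEq V] {x y : V} (hxy : x ≠ y)
    (W : Fin 3 → G.Walk x y) (hW : ∀ i, (W i).IsPath)
    (m : Fin 3 → V) (hm : ∀ i, m i ∈ (W i).support)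
    (hmx : ∀ i, m i ≠ x) (hmy : ∀ i, m i ≠ y)
    (hdisj : ∀ i j, i ≠ j → ∀ v, v ∈ (W i).support → v ∈ (W j).support → v = x ∨ v = y) :
    ContainsSubdivision (completeBipartiteGraph (Fin 2) (Fin 3)) G := by
  classical
  have hmm : ∀ i j, m i = m j → i = j := by
    intro i j hij
    by_contra hne
    rcases hdisj i j hne (m i) (hm i) (hij ▸ hm j) with h | h
    · exact hmx i h
    · exact hmy i h
  have htd : ∀ i (v : V), v ∈ ((W i).takeUntil (m i) (hm i)).support →
      v ∈ ((W i).dropUntil (m i) (hm i)).support → v = m i :=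
    fun i v h1 h2 => eq_of_mem_takeUntil_mem_dropUntil (hW i) (hm i) h1 h2
  have hy_take : ∀ i, y ∉ ((W i).takeUntil (m i) (hm i)).support := by
    intro i hy
    exact hmy i (htd i y hy ((W i).dropUntil (m i) (hm i)).end_mem_support).symm
  have hx_drop : ∀ i, x ∉ ((W i).dropUntil (m i) (hm i)).support := by
    intro i hx
    exact hmx i (htd i x ((W i).takeUntil (m i) (hm i)).start_mem_support hx).symm
  have hF0 : K23F x y m (Sum.inl 0) = x := by simp [K23F]
  have hF1 : K23F x y m (Sum.inl 1) = y := by simp [K23F]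
  have hFr : ∀ i, K23F x y m (Sum.inr i) = m i := fun i => rfl
  have hrange : ∀ w : V, w ∈ Set.range (K23F x y m) ↔ (w = x ∨ w = y ∨ ∃ i, w = m i) := by
    intro w
    constructor
    · rintro ⟨s, rfl⟩
      rcases s with a | i
      · fin_cases a
        · exact Or.inl hF0
        · exact Or.inr (Or.inl hF1)
      · exact Or.inr (Or.inr ⟨i, rfl⟩)
    · rintro (rfl | rfl | ⟨i, rfl⟩)
      · exact ⟨Sum.inl 0, hF0⟩
      · exact ⟨Sum.inl 1, hF1⟩
      · exact ⟨Sum.inr i, rfl⟩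
  obtain ⟨hmemL, hmemR⟩ := mem_K23P_support G W m hm
  -- subsets of the big walk's support
  have hsub : ∀ (a : Fin 2) (i : Fin 3) (hab) (v : V),
      v ∈ (K23P G W m hm (Sum.inl a) (Sum.inr i) hab).support → v ∈ (W i).support := by
    intro a i hab v hv
    rcases (hmemL a i hab v).mp hv with ⟨_, h⟩ | ⟨_, h⟩
    · exact SimpleGraph.Walk.support_takeUntil_subset _ _ h
    · exact SimpleGraph.Walk.support_dropUntil_subset _ _ h
  have hsub' : ∀ (a : Fin 2) (i : Fin 3) (hab) (v : V),
      v ∈ (K23P G W m hm (Sum.inr i) (Sum.inl a) hab).support → v ∈ (W i).support := by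
    intro a i hab v hv
    rcases (hmemR a i hab v).mp hv with ⟨_, h⟩ | ⟨_, h⟩
    · exact SimpleGraph.Walk.support_takeUntil_subset _ _ h
    · exact SimpleGraph.Walk.support_dropUntil_subset _ _ h
  refine ⟨K23F x y m, K23P G W m hm, ?_, ?_, ?_, ?_⟩
  · -- injective
    rintro (a | i) (b | j) h
    · rcases eq_or_ne a 0 with rfl | ha <;> rcases eq_or_ne b 0 with rfl | hb
      · rfl
      · have hb1 : b = 1 := by omega
        subst hb1; rw [hF0, hF1] at h; exact absurd h hxy
      · have ha1 : a = 1 := by omega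
        subst ha1; rw [hF0, hF1] at h; exact absurd h.symm hxy
      · have ha1 : a = 1 := by omega
        have hb1 : b = 1 := by omega
        subst ha1; subst hb1; rfl
    · rcases eq_or_ne a 0 with rfl | ha
      · rw [hF0, hFr] at h; exact absurd h.symm (hmx j)
      · have ha1 : a = 1 := by omega
        subst ha1; rw [hF1, hFr] at h; exact absurd h.symm (hmy j)
    · rcases eq_or_ne b 0 with rfl | hb
      · rw [hFr, hF0] at h; exact absurd h (hmx i)
      · have hb1 : b = 1 := by omega
        subst hb1; rw [hFr, hF1] at h; exact absurd h (hmy i)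
    · exact congrArg Sum.inr (hmm i j h)
  · -- paths
    rintro (a | i) (b | j) hab
    · exact absurd hab (by simp)
    · by_cases h : a = 0 <;>
        simp only [K23P, h, dif_pos, dif_neg, not_false_iff, SimpleGraph.Walk.isPath_copy]
      · exact (SimpleGraph.Walk.isPath_copy _ _ _).mpr ((hW j).takeUntil _)
      · exact (SimpleGraph.Walk.isPath_copy _ _ _).mpr ((hW j).dropUntil _).reverse
    · by_cases h : b = 0 <;>
        simp only [K23P, h, dif_pos, dif_neg, not_false_iff, SimpleGraph.Walk.isPath_copy]
      · exact (SimpleGraph.Walk.isPath_copy _ _ _).mpr ((hW i).takeUntil _).reverse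
      · exact (SimpleGraph.Walk.isPath_copy _ _ _).mpr ((hW i).dropUntil _)
    · exact absurd hab (by simp)
  · -- condition 3
    rintro (a | i) (b | j) hab w hw hrw
    · exact absurd hab (by simp)
    · rcases (hmemL a j hab w).mp hw with ⟨ha, h⟩ | ⟨ha, h⟩
      · subst ha
        rcases (hrange w).mp hrw with rfl | rfl | ⟨i, rfl⟩
        · exact Or.inl hF0.symm
        · exact absurd h (hy_take j)
        · rcases eq_or_ne i j with rfl | hne
          · exact Or.inr rfl
          · rcases hdisj i j hne (m i) (hm i)
              (SimpleGraph.Walk.support_takeUntil_subset _ _ h) with h' | h'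
            · exact absurd h' (hmx i)
            · exact absurd h' (hmy i)
      · have ha1 : a = 1 := by omega
        subst ha1
        rcases (hrange w).mp hrw with rfl | rfl | ⟨i, rfl⟩
        · exact absurd h (hx_drop j)
        · exact Or.inl hF1.symm
        · rcases eq_or_ne i j with rfl | hne
          · exact Or.inr rfl
          · rcases hdisj i j hne (m i) (hm i)
              (SimpleGraph.Walk.support_dropUntil_subset _ _ h) with h' | h'
            · exact absurd h' (hmx i)
            · exact absurd h' (hmy i)
    · rcases (hmemR b i hab w).mp hw with ⟨hb, h⟩ | ⟨hb, h⟩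
      · subst hb
        rcases (hrange w).mp hrw with rfl | rfl | ⟨j, rfl⟩
        · exact Or.inr hF0.symm
        · exact absurd h (hy_take i)
        · rcases eq_or_ne j i with rfl | hne
          · exact Or.inl rfl
          · rcases hdisj j i hne (m j) (hm j)
              (SimpleGraph.Walk.support_takeUntil_subset _ _ h) with h' | h'
            · exact absurd h' (hmx j)
            · exact absurd h' (hmy j)
      · have hb1 : b = 1 := by omega
        subst hb1
        rcases (hrange w).mp hrw with rfl | rfl | ⟨j, rfl⟩
        · exact absurd h (hx_drop i)
        · exact Or.inr hF1.symm
        · rcases eq_or_ne j i with rfl | hne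
          · exact Or.inl rfl
          · rcases hdisj j i hne (m j) (hm j)
              (SimpleGraph.Walk.support_dropUntil_subset _ _ h) with h' | h'
            · exact absurd h' (hmx j)
            · exact absurd h' (hmy j)
    · exact absurd hab (by simp)
  · -- condition 4
    have hdiff : ∀ (i₁ i₂ : Fin 3), i₁ ≠ i₂ → ∀ w : V, w ∈ (W i₁).support →
        w ∈ (W i₂).support → w ∈ Set.range (K23F x y m) := by
      intro i₁ i₂ hne w hw1 hw2
      rcases hdisj i₁ i₂ hne w hw1 hw2 with rfl | rfl
      · exact (hrange w).mpr (Or.inl rfl)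
      · exact (hrange w).mpr (Or.inr (Or.inl rfl))
    have hcore : ∀ (a c : Fin 2) (i : Fin 3), a ≠ c → ∀ w : V,
        ((a = 0 ∧ w ∈ ((W i).takeUntil (m i) (hm i)).support) ∨
         (a ≠ 0 ∧ w ∈ ((W i).dropUntil (m i) (hm i)).support)) →
        ((c = 0 ∧ w ∈ ((W i).takeUntil (m i) (hm i)).support) ∨
         (c ≠ 0 ∧ w ∈ ((W i).dropUntil (m i) (hm i)).support)) →
        w ∈ Set.range (K23F x y m) := by
      intro a c i hac w h1 h2
      rcases h1 with ⟨ha, h1⟩ | ⟨ha, h1⟩ <;> rcases h2 with ⟨hc, h2⟩ | ⟨hc, h2⟩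
      · exact absurd (ha.trans hc.symm) hac
      · exact (hrange w).mpr (Or.inr (Or.inr ⟨i, htd i w h1 h2⟩))
      · exact (hrange w).mpr (Or.inr (Or.inr ⟨i, htd i w h2 h1⟩))
      · have : a = c := by omega
        exact absurd this hac
    rintro (a | i) (b | j) (c | k) (d | l) h1 h2 hne w hw1 hw2
    · exact absurd h1 (by simp)
    · exact absurd h1 (by simp)
    · exact absurd h1 (by simp)
    · exact absurd h1 (by simp)
    · exact absurd h2 (by simp)
    · -- (inl a, inr j) vs (inl c, inr l)
      rcases eq_or_ne j l with rfl | hjl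
      · have hac : a ≠ c := by
          intro h; exact hne (by rw [h])
        exact hcore a c j hac w ((hmemL a j h1 w).mp hw1) ((hmemL c j h2 w).mp hw2)
      · exact hdiff j l hjl w (hsub a j h1 w hw1) (hsub c l h2 w hw2)
    · -- (inl a, inr j) vs (inr k, inl d)
      rcases eq_or_ne j k with rfl | hjk
      · have had : a ≠ d := by
          intro h; subst h; exact hne (Sym2.eq_swap).symm
        exact hcore a d j had w ((hmemL a j h1 w).mp hw1) ((hmemR d j h2 w).mp hw2)
      · exact hdiff j k hjk w (hsub a j h1 w hw1) (hsub' d k h2 w hw2)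
    · exact absurd h2 (by simp)
    · exact absurd h2 (by simp)
    · -- (inr i, inl b) vs (inl c, inr l)
      rcases eq_or_ne i l with rfl | hil
      · have hbc : b ≠ c := by
          intro h; subst h; exact hne (Sym2.eq_swap)
        exact hcore b c i hbc w ((hmemR b i h1 w).mp hw1) ((hmemL c i h2 w).mp hw2)
      · exact hdiff i l hil w (hsub' b i h1 w hw1) (hsub c l h2 w hw2)
    · -- (inr i, inl b) vs (inr k, inl d)
      rcases eq_or_ne i k with rfl | hik
      · have hbd : b ≠ d := by
          intro h; exact hne (by rw [h])
        exact hcore b d i hbd w ((hmemR b i h1 w).mp hw1) ((hmemR d i h2 w).mp hw2)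
      · exact hdiff i k hik w (hsub' b i h1 w hw1) (hsub' d k h2 w hw2)
    · exact absurd h2 (by simp)
    · exact absurd h1 (by simp)
    · exact absurd h1 (by simp)
    · exact absurd h1 (by simp)
    · exact absurd h1 (by simp)

private lemma build_theta (G : SimpleGraph V) [DecidableEq V] (xs us : ℕ → V)
    (k j1 j2 j3 : ℕ) (w1 w2 w3 : V)
    (h12 : j1 ≤ j2) (h23 : j2 ≤ j3) (h3k : j3 < k)
    (hxinj : ∀ p q, p ≤ k → q ≤ k → xs p = xs q → p = q)
    (huinj : ∀ p q, p < k → q < k → us p = us q → p = q)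
    (hxu : ∀ p q, p ≤ k → q < k → xs p ≠ us q)
    (hadj : ∀ p, p < k → G.Adj (xs p) (us p) ∧ G.Adj (us p) (xs (p + 1)))
    (hw12 : w1 ≠ w2) (hw13 : w1 ≠ w3) (hw23 : w2 ≠ w3)
    (hwx : ∀ p, p ≤ k → w1 ≠ xs p ∧ w2 ≠ xs p ∧ w3 ≠ xs p)
    (hwu : ∀ p, p < j3 → w1 ≠ us p ∧ w2 ≠ us p ∧ w3 ≠ us p)
    (hadj1 : G.Adj (xs k) w1 ∧ G.Adj w1 (xs j1))
    (hadj2 : G.Adj (xs k) w2 ∧ G.Adj w2 (xs j2))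
    (hadj3 : G.Adj (xs k) w3 ∧ G.Adj w3 (xs j3)) :
    ContainsSubdivision (completeBipartiteGraph (Fin 2) (Fin 3)) G := by
  classical
  have h1adj : ∀ m, m < j2 - j1 →
      G.Adj (xs (j1 + m)) (us (j1 + m)) ∧ G.Adj (us (j1 + m)) (xs (j1 + m + 1)) :=
    fun m hm => hadj (j1 + m) (by omega)
  have h3adj : ∀ m, m < j3 - j2 →
      G.Adj (xs (j2 + m)) (us (j2 + m)) ∧ G.Adj (us (j2 + m)) (xs (j2 + m + 1)) :=
    fun m hm => hadj (j2 + m) (by omega)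
  set C1 : G.Walk (xs j1) (xs j2) :=
    (chainWalk G xs us j1 (j2 - j1) h1adj).copy rfl
      (congrArg xs (by omega : j1 + (j2 - j1) = j2)) with hC1def
  set C3 : G.Walk (xs j3) (xs j2) :=
    ((chainWalk G xs us j2 (j3 - j2) h3adj).copy rfl
      (congrArg xs (by omega : j2 + (j3 - j2) = j3))).reverse with hC3def
  have hC1mem : ∀ v : V, v ∈ C1.support ↔
      ((∃ r, j1 ≤ r ∧ r ≤ j2 ∧ v = xs r) ∨ (∃ r, j1 ≤ r ∧ r < j2 ∧ v = us r)) := by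
    intro v
    rw [hC1def, SimpleGraph.Walk.support_copy, mem_chainWalk_support]
    constructor
    · rintro (⟨m, hm, rfl⟩ | ⟨m, hm, rfl⟩)
      · exact Or.inl ⟨j1 + m, by omega, by omega, rfl⟩
      · exact Or.inr ⟨j1 + m, by omega, by omega, rfl⟩
    · rintro (⟨r, hr1, hr2, rfl⟩ | ⟨r, hr1, hr2, rfl⟩)
      · exact Or.inl ⟨r - j1, by omega, congrArg xs (by omega)⟩
      · exact Or.inr ⟨r - j1, by omega, congrArg us (by omega)⟩
  have hC3mem : ∀ v : V, v ∈ C3.support ↔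
      ((∃ r, j2 ≤ r ∧ r ≤ j3 ∧ v = xs r) ∨ (∃ r, j2 ≤ r ∧ r < j3 ∧ v = us r)) := by
    intro v
    rw [hC3def, SimpleGraph.Walk.support_reverse, List.mem_reverse,
      SimpleGraph.Walk.support_copy, mem_chainWalk_support]
    constructor
    · rintro (⟨m, hm, rfl⟩ | ⟨m, hm, rfl⟩)
      · exact Or.inl ⟨j2 + m, by omega, by omega, rfl⟩
      · exact Or.inr ⟨j2 + m, by omega, by omega, rfl⟩
    · rintro (⟨r, hr1, hr2, rfl⟩ | ⟨r, hr1, hr2, rfl⟩)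
      · exact Or.inl ⟨r - j2, by omega, congrArg xs (by omega)⟩
      · exact Or.inr ⟨r - j2, by omega, congrArg us (by omega)⟩
  have hC1nd : C1.support.Nodup := by
    rw [hC1def, SimpleGraph.Walk.support_copy]
    exact chainWalk_support_nodup G xs us j1 (j2 - j1) h1adj
      (fun p q hp hq h => by have := hxinj (j1 + p) (j1 + q) (by omega) (by omega) h; omega)
      (fun p q hp hq h => by have := huinj (j1 + p) (j1 + q) (by omega) (by omega) h; omega)
      (fun p q hp hq => hxu (j1 + p) (j1 + q) (by omega) (by omega))
  have hC3nd : C3.support.Nodup := by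
    rw [hC3def, SimpleGraph.Walk.support_reverse, List.nodup_reverse,
      SimpleGraph.Walk.support_copy]
    exact chainWalk_support_nodup G xs us j2 (j3 - j2) h3adj
      (fun p q hp hq h => by have := hxinj (j2 + p) (j2 + q) (by omega) (by omega) h; omega)
      (fun p q hp hq h => by have := huinj (j2 + p) (j2 + q) (by omega) (by omega) h; omega)
      (fun p q hp hq => hxu (j2 + p) (j2 + q) (by omega) (by omega))
  set W1 : G.Walk (xs k) (xs j2) :=
    SimpleGraph.Walk.cons hadj1.1 (SimpleGraph.Walk.cons hadj1.2 C1) with hW1def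
  set W2 : G.Walk (xs k) (xs j2) :=
    SimpleGraph.Walk.cons hadj2.1 (SimpleGraph.Walk.cons hadj2.2 SimpleGraph.Walk.nil) with hW2def
  set W3 : G.Walk (xs k) (xs j2) :=
    SimpleGraph.Walk.cons hadj3.1 (SimpleGraph.Walk.cons hadj3.2 C3) with hW3def
  have hW1mem : ∀ v : V, v ∈ W1.support ↔ (v = xs k ∨ v = w1 ∨ v ∈ C1.support) := by
    intro v; rw [hW1def]; simp [SimpleGraph.Walk.support_cons]
  have hW2mem : ∀ v : V, v ∈ W2.support ↔ (v = xs k ∨ v = w2 ∨ v = xs j2) := by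
    intro v; rw [hW2def]; simp [SimpleGraph.Walk.support_cons]
  have hW3mem : ∀ v : V, v ∈ W3.support ↔ (v = xs k ∨ v = w3 ∨ v ∈ C3.support) := by
    intro v; rw [hW3def]; simp [SimpleGraph.Walk.support_cons]
  -- w's are not in the chains
  have hw1C1 : w1 ∉ C1.support := by
    rw [hC1mem]
    rintro (⟨r, h1, h2, hr⟩ | ⟨r, h1, h2, hr⟩)
    · exact (hwx r (by omega)).1 hr
    · exact (hwu r (by omega)).1 hr
  have hw2C1 : w2 ∉ C1.support := by
    rw [hC1mem]
    rintro (⟨r, h1, h2, hr⟩ | ⟨r, h1, h2, hr⟩)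
    · exact (hwx r (by omega)).2.1 hr
    · exact (hwu r (by omega)).2.1 hr
  have hw3C1 : w3 ∉ C1.support := by
    rw [hC1mem]
    rintro (⟨r, h1, h2, hr⟩ | ⟨r, h1, h2, hr⟩)
    · exact (hwx r (by omega)).2.2 hr
    · exact (hwu r (by omega)).2.2 hr
  have hw1C3 : w1 ∉ C3.support := by
    rw [hC3mem]
    rintro (⟨r, h1, h2, hr⟩ | ⟨r, h1, h2, hr⟩)
    · exact (hwx r (by omega)).1 hr
    · exact (hwu r (by omega)).1 hr
  have hw2C3 : w2 ∉ C3.support := by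
    rw [hC3mem]
    rintro (⟨r, h1, h2, hr⟩ | ⟨r, h1, h2, hr⟩)
    · exact (hwx r (by omega)).2.1 hr
    · exact (hwu r (by omega)).2.1 hr
  have hw3C3 : w3 ∉ C3.support := by
    rw [hC3mem]
    rintro (⟨r, h1, h2, hr⟩ | ⟨r, h1, h2, hr⟩)
    · exact (hwx r (by omega)).2.2 hr
    · exact (hwu r (by omega)).2.2 hr
  have hxkC1 : xs k ∉ C1.support := by
    rw [hC1mem]
    rintro (⟨r, h1, h2, hr⟩ | ⟨r, h1, h2, hr⟩)
    · have := hxinj k r le_rfl (by omega) hr; omega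
    · exact hxu k r le_rfl (by omega) hr
  have hxkC3 : xs k ∉ C3.support := by
    rw [hC3mem]
    rintro (⟨r, h1, h2, hr⟩ | ⟨r, h1, h2, hr⟩)
    · have := hxinj k r le_rfl (by omega) hr; omega
    · exact hxu k r le_rfl (by omega) hr
  -- paths
  have hP1 : W1.IsPath := by
    rw [SimpleGraph.Walk.isPath_def, hW1def]
    simp only [SimpleGraph.Walk.support_cons, List.nodup_cons, List.mem_cons]
    refine ⟨?_, ?_, hC1nd⟩
    · rintro (h | h)
      · exact (hwx k le_rfl).1 h.symm
      · exact hxkC1 h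
    · exact hw1C1
  have hP2 : W2.IsPath := by
    rw [SimpleGraph.Walk.isPath_def, hW2def]
    simp only [SimpleGraph.Walk.support_cons, SimpleGraph.Walk.support_nil, List.nodup_cons,
      List.mem_cons, List.mem_singleton, List.not_mem_nil, or_false, List.nodup_nil]
    refine ⟨?_, ?_, by simp⟩
    · rintro (h | h)
      · exact (hwx k le_rfl).2.1 h.symm
      · have := hxinj k j2 le_rfl (by omega) h; omega
    · exact fun h => (hwx j2 (by omega)).2.1 h
  have hP3 : W3.IsPath := by
    rw [SimpleGraph.Walk.isPath_def, hW3def]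
    simp only [SimpleGraph.Walk.support_cons, List.nodup_cons, List.mem_cons]
    refine ⟨?_, ?_, hC3nd⟩
    · rintro (h | h)
      · exact (hwx k le_rfl).2.2 h.symm
      · exact hxkC3 h
    · exact hw3C3
  -- pairwise internal disjointness
  have hD12 : ∀ v : V, v ∈ W1.support → v ∈ W2.support → v = xs k ∨ v = xs j2 := by
    intro v h1 h2
    rcases (hW2mem v).mp h2 with rfl | hv | rfl
    · exact Or.inl rfl
    · rcases (hW1mem v).mp h1 with h | h | h
      · exact Or.inl h
      · exact absurd (h.symm.trans hv) hw12
      · exact absurd (hv ▸ h) hw2C1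
    · exact Or.inr rfl
  have hD13 : ∀ v : V, v ∈ W1.support → v ∈ W3.support → v = xs k ∨ v = xs j2 := by
    intro v h1 h3
    rcases (hW3mem v).mp h3 with rfl | hv | hc3
    · exact Or.inl rfl
    · rcases (hW1mem v).mp h1 with h | h | h
      · exact Or.inl h
      · exact absurd (h.symm.trans hv) hw13
      · exact absurd (hv ▸ h) hw3C1
    · rcases (hC3mem v).mp hc3 with ⟨r, hr1, hr2, rfl⟩ | ⟨r, hr1, hr2, rfl⟩
      · rcases (hW1mem _).mp h1 with h | h | h
        · have := hxinj r k (by omega) le_rfl h; omega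
        · exact absurd h.symm ((hwx r (by omega)).1)
        · rcases (hC1mem _).mp h with ⟨r', h1', h2', hr'⟩ | ⟨r', h1', h2', hr'⟩
          · have := hxinj r r' (by omega) (by omega) hr'
            have : r = j2 := by omega
            exact Or.inr (congrArg xs this)
          · exact absurd hr' (hxu r r' (by omega) (by omega))
      · rcases (hW1mem _).mp h1 with h | h | h
        · exact absurd h.symm (hxu k r le_rfl (by omega))
        · exact absurd h.symm ((hwu r (by omega)).1)
        · rcases (hC1mem _).mp h with ⟨r', h1', h2', hr'⟩ | ⟨r', h1', h2', hr'⟩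
          · exact absurd hr'.symm (hxu r' r (by omega) (by omega))
          · have := huinj r' r (by omega) (by omega) hr'.symm
            omega
  have hD23 : ∀ v : V, v ∈ W2.support → v ∈ W3.support → v = xs k ∨ v = xs j2 := by
    intro v h2 h3
    rcases (hW2mem v).mp h2 with rfl | hv | rfl
    · exact Or.inl rfl
    · rcases (hW3mem v).mp h3 with h | h | h
      · exact Or.inl h
      · exact absurd (hv.symm.trans h) hw23
      · exact absurd (hv ▸ h) hw2C3
    · exact Or.inr rfl
  -- assemble
  have hxy : xs k ≠ xs j2 := by
    intro h; have := hxinj k j2 le_rfl (by omega) h; omega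
  refine contains_K23 G hxy ![W1, W2, W3] ?_ ![w1, w2, w3] ?_ ?_ ?_ ?_
  · intro i; fin_cases i <;> simp only [Matrix.cons_val_zero, Matrix.cons_val_one,
      Matrix.head_cons, Matrix.cons_val_two, Matrix.tail_cons]
    · exact hP1
    · exact hP2
    · exact hP3
  · intro i; fin_cases i <;> simp only [Matrix.cons_val_zero, Matrix.cons_val_one,
      Matrix.head_cons, Matrix.cons_val_two, Matrix.tail_cons]
    · exact (hW1mem w1).mpr (Or.inr (Or.inl rfl))
    · exact (hW2mem w2).mpr (Or.inr (Or.inl rfl))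
    · exact (hW3mem w3).mpr (Or.inr (Or.inl rfl))
  · intro i; fin_cases i <;> simp only [Matrix.cons_val_zero, Matrix.cons_val_one,
      Matrix.head_cons, Matrix.cons_val_two, Matrix.tail_cons]
    · exact (hwx k le_rfl).1
    · exact (hwx k le_rfl).2.1
    · exact (hwx k le_rfl).2.2
  · intro i; fin_cases i <;> simp only [Matrix.cons_val_zero, Matrix.cons_val_one,
      Matrix.head_cons, Matrix.cons_val_two, Matrix.tail_cons]
    · exact (hwx j2 (by omega)).1
    · exact (hwx j2 (by omega)).2.1
    · exact (hwx j2 (by omega)).2.2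
  · intro i j hij v hvi hvj
    fin_cases i <;> fin_cases j <;>
      simp only [Matrix.cons_val_zero, Matrix.cons_val_one, Matrix.head_cons,
        Matrix.cons_val_two, Matrix.tail_cons] at hvi hvj hij ⊢
    · exact absurd rfl hij
    · exact hD12 v hvi hvj
    · exact hD13 v hvi hvj
    · exact hD12 v hvj hvi
    · exact absurd rfl hij
    · exact hD23 v hvi hvj
    · exact hD13 v hvj hvi
    · exact hD23 v hvj hvi
    · exact absurd rfl hij

private lemma exists_theta (G : SimpleGraph V) [DecidableEq V] (S T : Finset V)
    (hd : Disjoint S T) (a b : V → V)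
    (hab : ∀ u ∈ T, a u ∈ S ∧ b u ∈ S ∧ a u ≠ b u ∧ G.Adj u (a u) ∧ G.Adj u (b u))
    (hT : T.Nonempty)
    (hdeg : ∀ x ∈ S, 3 ≤ (T.filter (fun u => a u = x ∨ b u = x)).card) :
    ContainsSubdivision (completeBipartiteGraph (Fin 2) (Fin 3)) G := by
  classical
  set P : ℕ → Prop := fun k => ∃ xs us : ℕ → V,
    (∀ i, i ≤ k → xs i ∈ S) ∧ (∀ i, i < k → us i ∈ T) ∧
    (∀ p q, p ≤ k → q ≤ k → xs p = xs q → p = q) ∧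
    (∀ p q, p < k → q < k → us p = us q → p = q) ∧
    (∀ i, i < k → ((a (us i) = xs i ∧ b (us i) = xs (i + 1)) ∨
      (a (us i) = xs (i + 1) ∧ b (us i) = xs i))) with hPdef
  obtain ⟨u0, hu0⟩ := hT
  have h0 := hab u0 hu0
  have hP1 : P 1 := by
    refine ⟨fun i => if i = 0 then a u0 else b u0, fun _ => u0, ?_, ?_, ?_, ?_, ?_⟩
    · intro i _; by_cases h : i = 0 <;> simp [h, h0.1, h0.2.1]
    · intro i _; exact hu0
    · intro p q hp hq h
      by_cases hp0 : p = 0 <;> by_cases hq0 : q = 0 <;> simp [hp0, hq0] at h ⊢ <;> try omega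
      · exact absurd h h0.2.2.1
      · exact absurd h.symm h0.2.2.1
    · intro p q hp hq _; omega
    · intro i hi
      have : i = 0 := by omega
      subst this
      simp
  have hbound : ∀ m, P m → m < S.card := by
    intro m ⟨xs, us, hxs, _, hinj, _, _⟩
    have hcard : (Finset.range (m + 1)).card ≤ S.card := by
      apply Finset.card_le_card_of_injOn xs
      · intro i hi
        exact hxs i (Nat.lt_succ_iff.mp (Finset.mem_range.mp hi))
      · intro p hp q hq h
        exact hinj p q (Nat.lt_succ_iff.mp (Finset.mem_range.mp hp))
          (Nat.lt_succ_iff.mp (Finset.mem_range.mp hq)) h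
    simpa using hcard
  letI : DecidablePred P := Classical.decPred P
  set k := Nat.findGreatest P S.card with hkdef
  have h1S : 1 ≤ S.card := le_of_lt (hbound 1 hP1)
  have hPk : P k := Nat.findGreatest_spec h1S hP1
  have hk1 : 1 ≤ k := Nat.le_findGreatest h1S hP1
  have hmax : ¬ P (k + 1) := by
    intro hcontra
    have hlt := hbound (k + 1) hcontra
    exact Nat.findGreatest_is_greatest (n := S.card) (by rw [← hkdef]; omega) (by omega) hcontra
  obtain ⟨xs, us, hxsS, husT, hxinj, huinj, hpair⟩ := hPk
  have hxu : ∀ p q, p ≤ k → q < k → xs p ≠ us q := by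
    intro p q hp hq h
    exact (Finset.disjoint_left.mp hd (hxsS p hp)) (h ▸ husT q hq)
  have hadjchain : ∀ p, p < k → G.Adj (xs p) (us p) ∧ G.Adj (us p) (xs (p + 1)) := by
    intro p hp
    obtain ⟨_, _, _, h4, h5⟩ := hab (us p) (husT p hp)
    rcases hpair p hp with ⟨ha', hb'⟩ | ⟨ha', hb'⟩
    · exact ⟨(ha' ▸ h4).symm, hb' ▸ h5⟩
    · exact ⟨(hb' ▸ h5).symm, ha' ▸ h4⟩
  set e := xs k with hedef
  have heS : e ∈ S := hxsS k le_rfl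
  set D := T.filter (fun u => a u = e ∨ b u = e) with hDdef
  have hDsubT : ∀ w ∈ D, w ∈ T := fun w hw => (Finset.mem_filter.mp hw).1
  have hDe : ∀ w ∈ D, a w = e ∨ b w = e := fun w hw => (Finset.mem_filter.mp hw).2
  have hD3 : 3 ≤ D.card := hdeg e heS
  -- pick three distinct members of D
  obtain ⟨w1, hw1D⟩ : D.Nonempty := Finset.card_pos.mp (by omega)
  obtain ⟨w2, hw2D'⟩ : (D.erase w1).Nonempty := by
    apply Finset.card_pos.mp
    have := Finset.card_erase_of_mem hw1D
    omega
  obtain ⟨w3, hw3D''⟩ : ((D.erase w1).erase w2).Nonempty := by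
    apply Finset.card_pos.mp
    have h1 := Finset.card_erase_of_mem hw1D
    have h2 := Finset.card_erase_of_mem hw2D'
    omega
  have hw2D : w2 ∈ D := Finset.mem_of_mem_erase hw2D'
  have hw3D : w3 ∈ D := Finset.mem_of_mem_erase (Finset.mem_of_mem_erase hw3D'')
  have h12 : w1 ≠ w2 := fun h => (Finset.ne_of_mem_erase hw2D') h.symm
  have h23 : w2 ≠ w3 := fun h => (Finset.ne_of_mem_erase hw3D'') h.symm
  have h13 : w1 ≠ w3 := fun h =>
    (Finset.ne_of_mem_erase (Finset.mem_of_mem_erase hw3D'')) h.symm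
  -- every member of D is only possibly equal to us (k-1)
  have hwnotus : ∀ w ∈ D, ∀ p, p + 1 < k → w ≠ us p := by
    intro w hw p hp h
    subst h
    rcases hpair p (by omega) with ⟨ha', hb'⟩ | ⟨ha', hb'⟩ <;>
      rcases hDe _ hw with he' | he'
    · have := hxinj p k (by omega) le_rfl (by rw [← ha', he'])
      omega
    · have := hxinj (p + 1) k (by omega) le_rfl (by rw [← hb', he'])
      omega
    · have := hxinj (p + 1) k (by omega) le_rfl (by rw [← ha', he'])
      omega
    · have := hxinj p k (by omega) le_rfl (by rw [← hb', he'])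
      omega
  -- partner of each member of D lies on the path
  have hpartner : ∀ w ∈ D, ∃ j, j < k ∧
      ((a w = e ∧ b w = xs j) ∨ (b w = e ∧ a w = xs j)) := by
    intro w hw
    obtain ⟨haS, hbS, habne, _, _⟩ := hab w (hDsubT w hw)
    -- the partner vertex
    have hkey : ∃ j, j ≤ k ∧ ((a w = e ∧ b w = xs j) ∨ (b w = e ∧ a w = xs j)) := by
      by_contra hno
      push_neg at hno
      -- build a longer path
      apply hmax
      have hwnus : ∀ q, q < k → w ≠ us q := by
        intro q hq heq
        rcases hpair q hq with ⟨ha', hb'⟩ | ⟨ha', hb'⟩ <;> rcases hDe _ hw with he' | he'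
        · have h1 : a w = xs q := by rw [heq, ha']
          have := hxinj q k (by omega) le_rfl (h1.symm.trans (he'.trans hedef))
          omega
        · have h1 : b w = xs (q + 1) := by rw [heq, hb']
          have h2 : a w = xs q := by rw [heq, ha']
          exact (hno q (by omega)).2 he' h2
        · have h1 : a w = xs (q + 1) := by rw [heq, ha']
          have h2 : b w = xs q := by rw [heq, hb']
          exact (hno q (by omega)).1 he' h2
        · have h1 : b w = xs q := by rw [heq, hb']
          have := hxinj q k (by omega) le_rfl (h1.symm.trans (he'.trans hedef))
          omega
      refine ⟨fun i => if i = k + 1 then (if a w = e then b w else a w) else xs i,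
        fun i => if i = k then w else us i, ?_, ?_, ?_, ?_, ?_⟩
      · intro i hi
        dsimp only
        by_cases h : i = k + 1
        · rw [if_pos h]
          by_cases h2 : a w = e
          · rw [if_pos h2]; exact hbS
          · rw [if_neg h2]; exact haS
        · rw [if_neg h]
          exact hxsS i (by omega)
      · intro i hi
        dsimp only
        by_cases h : i = k
        · rw [if_pos h]; exact hDsubT w hw
        · rw [if_neg h]; exact husT i (by omega)
      · intro p q hp hq h
        dsimp only at h
        by_cases hpk : p = k + 1 <;> by_cases hqk : q = k + 1
        · omega
        · exfalso
          rw [if_pos hpk, if_neg hqk] at h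
          by_cases h2 : a w = e
          · rw [if_pos h2] at h
            exact (hno q (by omega)).1 h2 h
          · rw [if_neg h2] at h
            rcases hDe _ hw with he' | he'
            · exact h2 he'
            · exact (hno q (by omega)).2 he' h
        · exfalso
          rw [if_neg hpk, if_pos hqk] at h
          by_cases h2 : a w = e
          · rw [if_pos h2] at h
            exact (hno p (by omega)).1 h2 h.symm
          · rw [if_neg h2] at h
            rcases hDe _ hw with he' | he'
            · exact h2 he'
            · exact (hno p (by omega)).2 he' h.symm
        · rw [if_neg hpk, if_neg hqk] at h
          exact hxinj p q (by omega) (by omega) h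
      · intro p q hp hq h
        dsimp only at h
        by_cases hpk : p = k <;> by_cases hqk : q = k
        · omega
        · exfalso
          rw [if_pos hpk, if_neg hqk] at h
          exact hwnus q (by omega) h
        · exfalso
          rw [if_neg hpk, if_pos hqk] at h
          exact hwnus p (by omega) h.symm
        · rw [if_neg hpk, if_neg hqk] at h
          exact huinj p q (by omega) (by omega) h
      · intro i hi
        dsimp only
        by_cases h : i = k
        · subst h
          rw [if_pos rfl, if_neg (show ¬ k = k + 1 by omega), if_pos rfl]
          by_cases h2 : a w = e
          · rw [if_pos h2]
            exact Or.inl ⟨h2.trans hedef, rfl⟩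
          · rw [if_neg h2]
            rcases hDe _ hw with he' | he'
            · exact absurd he' h2
            · exact Or.inr ⟨rfl, he'.trans hedef⟩
        · rw [if_neg h, if_neg (show ¬ i = k + 1 by omega), if_neg (show ¬ i + 1 = k + 1 by omega)]
          exact hpair i (by omega)
    obtain ⟨j, hj, hj2⟩ := hkey
    refine ⟨j, ?_, hj2⟩
    -- j ≠ k since partner ≠ e
    rcases lt_or_eq_of_le hj with h | h
    · exact h
    · exfalso
      subst h
      rcases hj2 with ⟨h1', h2'⟩ | ⟨h1', h2'⟩
      · exact habne (h1'.trans h2'.symm)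
      · exact habne (h2'.trans h1'.symm)
  obtain ⟨j1, hj1k, hj1⟩ := hpartner w1 hw1D
  obtain ⟨j2, hj2k, hj2⟩ := hpartner w2 hw2D
  obtain ⟨j3, hj3k, hj3⟩ := hpartner w3 hw3D
  have hadjw : ∀ w ∈ D, ∀ j, ((a w = e ∧ b w = xs j) ∨ (b w = e ∧ a w = xs j)) →
      G.Adj e w ∧ G.Adj w (xs j) := by
    intro w hw j hj
    obtain ⟨_, _, _, h4, h5⟩ := hab w (hDsubT w hw)
    rcases hj with ⟨hA, hB⟩ | ⟨hA, hB⟩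
    · exact ⟨(hA ▸ h4).symm, hB ▸ h5⟩
    · exact ⟨(hA ▸ h5).symm, hB ▸ h4⟩
  have hA1 := hadjw w1 hw1D j1 hj1
  have hA2 := hadjw w2 hw2D j2 hj2
  have hA3 := hadjw w3 hw3D j3 hj3
  have hwxS : ∀ w ∈ D, ∀ p, p ≤ k → w ≠ xs p := by
    intro w hw p hp h
    exact (Finset.disjoint_left.mp hd (hxsS p hp)) (h ▸ hDsubT w hw)
  -- main builder with sorted indices
  have hmain : ∀ (wa wb wc : V) (ja jb jc : ℕ),
      wa ∈ D → wb ∈ D → wc ∈ D → wa ≠ wb → wa ≠ wc → wb ≠ wc →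
      ja ≤ jb → jb ≤ jc → jc < k →
      (G.Adj e wa ∧ G.Adj wa (xs ja)) → (G.Adj e wb ∧ G.Adj wb (xs jb)) →
      (G.Adj e wc ∧ G.Adj wc (xs jc)) →
      ContainsSubdivision (completeBipartiteGraph (Fin 2) (Fin 3)) G := by
    intro wa wb wc ja jb jc hwa hwb hwc hab' hac hbc hja hjb hjc ha' hb' hc'
    exact build_theta G xs us k ja jb jc wa wb wc hja hjb hjc hxinj huinj hxu hadjchain
      hab' hac hbc
      (fun p hp => ⟨hwxS wa hwa p hp, hwxS wb hwb p hp, hwxS wc hwc p hp⟩)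
      (fun p hp => ⟨hwnotus wa hwa p (by omega), hwnotus wb hwb p (by omega),
        hwnotus wc hwc p (by omega)⟩)
      ha' hb' hc'
  rcases le_total j1 j2 with hj12 | hj12 <;> rcases le_total j2 j3 with hj23 | hj23 <;>
    rcases le_total j1 j3 with hj13 | hj13
  · exact hmain w1 w2 w3 j1 j2 j3 hw1D hw2D hw3D h12 h13 h23 hj12 hj23 hj3k hA1 hA2 hA3
  · exact hmain w1 w2 w3 j1 j2 j3 hw1D hw2D hw3D h12 h13 h23 hj12 hj23 hj3k hA1 hA2 hA3
  · exact hmain w1 w3 w2 j1 j3 j2 hw1D hw3D hw2D h13 h12 h23.symm hj13 hj23 hj2k hA1 hA3 hA2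
  · exact hmain w3 w1 w2 j3 j1 j2 hw3D hw1D hw2D h13.symm h23.symm h12 hj13 hj12 hj2k hA3 hA1 hA2
  · exact hmain w2 w1 w3 j2 j1 j3 hw2D hw1D hw3D h12.symm h23 h13 hj12 hj13 hj3k hA2 hA1 hA3
  · exact hmain w2 w3 w1 j2 j3 j1 hw2D hw3D hw1D h23 h12.symm h13.symm hj23 hj13 hj1k hA2 hA3 hA1
  · exact hmain w3 w2 w1 j3 j2 j1 hw3D hw2D hw1D h23.symm h13.symm h12.symm hj23 hj12 hj1k hA3 hA2 hA1
  · exact hmain w3 w2 w1 j3 j2 j1 hw3D hw2D hw1D h23.symm h13.symm h12.symm hj23 hj12 hj1k hA3 hA2 hA1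

private lemma count_lemma (G : SimpleGraph V) [DecidableEq V]
    (hK : ¬ ContainsSubdivision (completeBipartiteGraph (Fin 2) (Fin 3)) G) :
    ∀ (n : ℕ) (S T : Finset V), S.card ≤ n → Disjoint S T →
      (∀ u ∈ T, ∃ v ∈ S, ∃ w ∈ S, v ≠ w ∧ G.Adj u v ∧ G.Adj u w) →
      T.Nonempty → T.card + 2 ≤ 2 * S.card := by
  intro n
  induction n with
  | zero =>
      intro S T hScard hd hsel hT
      obtain ⟨u, hu⟩ := hT
      obtain ⟨v, hv, _⟩ := hsel u hu
      have hS0 : S = ∅ := Finset.card_eq_zero.mp (by omega)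
      rw [hS0] at hv
      exact absurd hv (Finset.notMem_empty v)
  | succ n ih =>
      intro S T hScard hd hsel hT
      classical
      have hsel' : ∀ u : V, ∃ p : V × V, u ∈ T →
          (p.1 ∈ S ∧ p.2 ∈ S ∧ p.1 ≠ p.2 ∧ G.Adj u p.1 ∧ G.Adj u p.2) := by
        intro u
        by_cases h : u ∈ T
        · obtain ⟨v, hv, w, hw, hne, h1, h2⟩ := hsel u h
          exact ⟨(v, w), fun _ => ⟨hv, hw, hne, h1, h2⟩⟩
        · exact ⟨(u, u), fun h' => absurd h' h⟩
      choose f hf using hsel'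
      set a : V → V := fun u => (f u).1 with hadef
      set b : V → V := fun u => (f u).2 with hbdef
      have hab : ∀ u ∈ T, a u ∈ S ∧ b u ∈ S ∧ a u ≠ b u ∧ G.Adj u (a u) ∧ G.Adj u (b u) :=
        fun u hu => hf u hu
      by_cases hx : ∃ x ∈ S, (T.filter (fun u => a u = x ∨ b u = x)).card ≤ 2
      · obtain ⟨x, hxS, hxcard⟩ := hx
        set D := T.filter (fun u => a u = x ∨ b u = x) with hDdef
        set S' := S.erase x with hS'def
        set T' := T \ D with hT'def
        have hTsub : T.card ≤ T'.card + 2 := by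
          have hsub : T ⊆ T' ∪ D := by
            intro u hu
            by_cases h : u ∈ D
            · exact Finset.mem_union_right _ h
            · exact Finset.mem_union_left _ (Finset.mem_sdiff.mpr ⟨hu, h⟩)
          calc T.card ≤ (T' ∪ D).card := Finset.card_le_card hsub
            _ ≤ T'.card + D.card := Finset.card_union_le _ _
            _ ≤ T'.card + 2 := by omega
        have hS'card : S'.card = S.card - 1 := Finset.card_erase_of_mem hxS
        have hS1 : 1 ≤ S.card := Finset.card_pos.mpr ⟨x, hxS⟩
        by_cases hT' : T'.Nonempty
        · have hd' : Disjoint S' T' :=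
            hd.mono (Finset.erase_subset _ _) (Finset.sdiff_subset)
          have hsel'' : ∀ u ∈ T', ∃ v ∈ S', ∃ w ∈ S', v ≠ w ∧ G.Adj u v ∧ G.Adj u w := by
            intro u hu
            obtain ⟨huT, huD⟩ := Finset.mem_sdiff.mp hu
            obtain ⟨h1, h2, h3, h4, h5⟩ := hab u huT
            have hax : a u ≠ x := by
              intro h
              exact huD (Finset.mem_filter.mpr ⟨huT, Or.inl h⟩)
            have hbx : b u ≠ x := by
              intro h
              exact huD (Finset.mem_filter.mpr ⟨huT, Or.inr h⟩)
            exact ⟨a u, Finset.mem_erase.mpr ⟨hax, h1⟩, b u,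
              Finset.mem_erase.mpr ⟨hbx, h2⟩, h3, h4, h5⟩
          have hrec := ih S' T' (by omega) hd' hsel'' hT'
          omega
        · have hT'0 : T'.card = 0 := by
            rw [Finset.card_eq_zero]
            exact Finset.not_nonempty_iff_eq_empty.mp hT'
          obtain ⟨u, hu⟩ := hT
          obtain ⟨h1, h2, h3, _, _⟩ := hab u hu
          have hS2 : 2 ≤ S.card := Finset.one_lt_card.mpr ⟨a u, h1, b u, h2, h3⟩
          omega
      · push_neg at hx
        exact absurd (exists_theta G S T hd a b hab hT (fun x hxS => by
          have := hx x hxS; omega)) hK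

/-- For an outerplanar graph on `n ≥ 3` vertices, every secure total dominating set has
at least `⌈(n+2)/3⌉ = (n+4)/3` vertices, i.e. `γ_st(G) ≥ ⌈(n+2)/3⌉`. -/
theorem stds_lower_bound_outerplanar [Fintype V] (G : SimpleGraph V)
    (hG : Outerplanar G) (hn : 3 ≤ Fintype.card V)
    (S : Set V) (hS : STDS G S) :
    (Fintype.card V + 4) / 3 ≤ S.ncard := by
  classical
  obtain ⟨hTD, hsec⟩ := hS
  set SF : Finset V := S.toFinset with hSF
  set TF : Finset V := SFᶜ with hTF
  have hmemSF : ∀ v, v ∈ SF ↔ v ∈ S := fun v => Set.mem_toFinset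
  have hdisj : Disjoint SF TF := disjoint_compl_right
  have hcards : SF.card + TF.card = Fintype.card V := by
    rw [hTF]
    exact Finset.card_add_card_compl SF
  have hncard : S.ncard = SF.card := by
    rw [hSF]
    exact Set.ncard_eq_toFinset_card' S
  have hsel : ∀ u ∈ TF, ∃ v ∈ SF, ∃ w ∈ SF, v ≠ w ∧ G.Adj u v ∧ G.Adj u w := by
    intro u hu
    have huS : u ∉ S := by
      rw [← hmemSF]
      exact Finset.mem_compl.mp hu
    obtain ⟨v, hvS, hadj, hTD'⟩ := hsec u huS
    obtain ⟨z, hz, hadjz⟩ := hTD' u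
    rcases hz with hz | hz
    · obtain ⟨hzS, hzv⟩ := hz
      have hzv' : z ≠ v := by simpa using hzv
      exact ⟨v, (hmemSF v).mpr hvS, z, (hmemSF z).mpr hzS, fun h => hzv' h.symm, hadj, hadjz⟩
    · have hzu : z = u := by simpa using hz
      rw [hzu] at hadjz
      exact absurd hadjz (G.loopless.irrefl u)
  rcases TF.eq_empty_or_nonempty with hTe | hTne
  · have hSall : SF.card = Fintype.card V := by
      rw [← hcards, hTe]
      simp
    omega
  · have := count_lemma G hG.2 SF.card SF TF le_rfl hdisj hsel hTne
    omega
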